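/- arXiv:2010.14620 — 3 statements merged into one kernel-verified Lean document; each statement's English description precedes it below -/
import Mathlib

section
/- Let c ⊆ E be a scenario and S ⊆ V a seed set. Form the auxiliary graph G' = (V ∪ {s, t}, E') with two new nodes s, t and edge set E' = {(i, j) ∈ E : (i, j) ∈ c} ∪ {(s, i) : i ∈ S} ∪ {(j, t) : j ∈ V \ S}. Let Z(c, S) be the maximum, over all flows x : E' → ℝ≥0 and values v ∈ ℝ satisfying flow conservation (net outflow v at s, net inflow v at t, net flow 0 at every node of V) and capacities x_{jt} ≤ 1 for every j ∈ V \ S, of the value v. Then the number of influenced nodes satisfies R(c, S) = |S| + Z(c, S); equivalently, Z(c, S) equals the number of nodes of V \ S reachable from S along edges of c. -/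
open scoped BigOperators

namespace CorrIM

variable {V : Type*} [Fintype V] [DecidableEq V]

section AuxLemmas

variable {α : Type*} [DecidableEq α]

/-- The number of occurrences of `x` in the list `es`. -/
def ecount (x : α) (es : List α) : ℕ := (es.filter (fun y => y = x)).length

lemma ecount_cons (x b : α) (es : List α) :
    ecount x (b :: es) = ecount x es + if b = x then 1 else 0 := by
  simp only [ecount, List.filter_cons]
  split
  · rename_i h
    rw [if_pos (by simpa using h)]
    simp [Nat.add_comm]
  · rename_i h
    rw [if_neg (by simpa using h)]
    simp

lemma ecount_append (x : α) (l₁ l₂ : List α) :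
    ecount x (l₁ ++ l₂) = ecount x l₁ + ecount x l₂ := by
  simp [ecount, List.filter_append]

lemma ecount_eq_zero {x : α} {es : List α} (h : x ∉ es) : ecount x es = 0 := by
  induction es with
  | nil => rfl
  | cons b es ih =>
    rw [ecount_cons, ih (fun hh => h (by simp [hh])),
      if_neg (fun hh : b = x => h (by simp [hh.symm]))]

lemma ecount_zip_le {β : Type*} [DecidableEq β] (a : α) (b : β) :
    ∀ (l : List α) (l' : List β), ecount (a, b) (l.zip l') ≤ ecount b l' := by
  intro l
  induction l with
  | nil => intro l'; simp [ecount]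
  | cons x l ih =>
    intro l'
    cases l' with
    | nil => simp [ecount]
    | cons y l' =>
      have h1 := ih l'
      rw [List.zip_cons_cons, ecount_cons, ecount_cons]
      by_cases h : ((x, y) : α × β) = (a, b)
      · rcases Prod.mk.injEq .. ▸ h with ⟨rfl, rfl⟩
        simp only [if_pos rfl]
        omega
      · rw [if_neg h]
        split <;> omega

lemma sum_count_filter (F : Finset α) (P : α → Prop) [DecidablePred P] :
    ∀ (es : List α), (∀ e ∈ es, e ∈ F) →
      ∑ e ∈ F.filter P, ((ecount e es : ℕ) : ℝ) = ((es.filter P).length : ℝ) := by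
  intro es
  induction es with
  | nil => intro _; simp [ecount]
  | cons b es ih =>
    intro hsub
    have hb : b ∈ F := hsub b (by simp)
    have h1 : ∀ e ∈ es, e ∈ F := fun e he => hsub e (by simp [he])
    have : ∀ e ∈ F.filter P, ((ecount e (b :: es) : ℕ) : ℝ)
        = ((ecount e es : ℕ) : ℝ) + (if b = e then 1 else 0) := by
      intro e _
      rw [ecount_cons]
      push_cast
      split <;> simp
    rw [Finset.sum_congr rfl this, Finset.sum_add_distrib, ih h1]
    have h2 : ∑ e ∈ F.filter P, (if b = e then (1:ℝ) else 0)
        = if b ∈ F.filter P then 1 else 0 := Finset.sum_ite_eq (F.filter P) b fun _ => 1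
    rw [h2]
    by_cases hP : P b
    · simp [List.filter_cons, hP, Finset.mem_filter, hb]
    · simp [List.filter_cons, hP, Finset.mem_filter, hb]

lemma srctgt (u : α) :
    ∀ (l : List α) (a : α),
      (((((a :: l).zip l)).filter (fun e => decide (e.1 = u))).length : ℝ)
          - ((((a :: l).zip l).filter (fun e => decide (e.2 = u))).length : ℝ)
        = (if a = u then 1 else 0) - (if (a :: l).getLast? = some u then 1 else 0) := by
  intro l
  induction l with
  | nil => intro a; simp
  | cons b l ih =>
    intro a
    have h := ih b
    simp only [List.zip_cons_cons, List.filter_cons, List.getLast?_cons_cons] at h ⊢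
    by_cases h1 : a = u <;> by_cases h2 : b = u <;>
      simp only [h1, h2, decide_true, decide_false, if_true, if_false, decide_eq_true_eq,
        eq_self_iff_true, List.length_cons, if_pos, if_neg] at h ⊢ <;>
      [skip; skip; skip; skip] <;> push_cast at h ⊢ <;> linarith

lemma last_of_zip (y : α) :
    ∀ (l : List α) (a : α), y ∉ (a :: l) →
      ∀ e ∈ ((a :: l) ++ [y]).zip (l ++ [y]), e.2 = y → some e.1 = (a :: l).getLast? := by
  intro l
  induction l with
  | nil =>
    intro a _ e he h2
    simp only [List.nil_append, List.cons_append, List.zip_cons_cons, List.zip_nil_right,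
      List.mem_singleton] at he
    subst he; simp
  | cons b l ih =>
    intro a hy e he h2
    simp only [List.cons_append, List.zip_cons_cons, List.mem_cons] at he
    rcases he with he | he
    · exfalso; subst he; exact hy (by simp [h2.symm])
    · rw [List.getLast?_cons_cons]
      exact ih b (fun h => hy (by simp [List.mem_cons] at h ⊢; tauto)) e (by simpa using he) h2

lemma rel_of_chain'_zip {r : α → α → Prop} :
    ∀ {vs : List α}, vs.Chain' r → ∀ e ∈ vs.zip vs.tail, r e.1 e.2 := by
  intro vs
  induction vs with
  | nil => simp
  | cons a l ih =>
    cases l with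
    | nil => simp
    | cons b l =>
      intro h e he
      rw [show List.Chain' r (a :: b :: l) ↔ _ from List.isChain_cons_cons] at h
      simp only [List.tail_cons, List.zip_cons_cons, List.mem_cons] at he
      rcases he with rfl | he
      · exact h.1
      · exact ih h.2 e (by simpa using he)

end AuxLemmas

/-- A node `i` is influenced: `i ∈ S`, or `i` is reachable from some node of `S`
along the live edges of the scenario `c`. -/
def influenced (c : Finset (V × V)) (S : Finset V) (i : V) : Prop :=
  ∃ s ∈ S, Relation.ReflTransGen (fun a b : V => (a, b) ∈ c) s i

/-- `R c S` : the number of influenced nodes in scenario `c` with seed set `S`. -/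
noncomputable def R (c : Finset (V × V)) (S : Finset V) : ℕ :=
  Set.ncard {i : V | influenced c S i}

/-- The Fréchet class `Θ` : probability distributions on scenarios (subsets of `E`)
whose marginals agree with the edge likelihoods `p`. -/
def memTheta (E : Finset (V × V)) (p : V × V → ℝ) (θ : Finset (V × V) → ℝ) : Prop :=
  (∀ c, 0 ≤ θ c) ∧ (∀ c, θ c ≠ 0 → c ⊆ E) ∧ (∑ c : Finset (V × V), θ c) = 1 ∧
    ∀ e ∈ E, (∑ c : Finset (V × V), if e ∈ c then θ c else 0) = p e

/-- Expected number of influenced nodes under the distribution `θ`. -/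
noncomputable def expInf (θ : Finset (V × V) → ℝ) (S : Finset V) : ℝ :=
  ∑ c : Finset (V × V), θ c * (R c S : ℝ)

/-- The correlation robust influence function `f^corr`. -/
noncomputable def fcorr (E : Finset (V × V)) (p : V × V → ℝ) (S : Finset V) : ℝ :=
  sInf {x : ℝ | ∃ θ, memTheta E p θ ∧ x = expInf θ S}

open Classical in
/-- Probability of the event `A` under the distribution `θ`. -/
noncomputable def prob (θ : Finset (V × V) → ℝ) (A : Finset (V × V) → Prop) : ℝ :=
  ∑ c : Finset (V × V), if A c then θ c else 0

/-- `γ` (a list of nodes `i₀, i₁, …, i_λ`, `λ ≥ 1`) is a directed path from the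
seed set `S` to the node `i` using edges of `E`. -/
def IsPathFrom (E : Finset (V × V)) (S : Finset V) (i : V) (γ : List V) : Prop :=
  2 ≤ γ.length ∧ (∃ s ∈ S, γ.head? = some s) ∧ γ.getLast? = some i ∧
    γ.Chain' (fun a b : V => (a, b) ∈ E)

/-- The list of edges `(i₀,i₁), …, (i_{λ-1}, i_λ)` of a path `γ = [i₀, …, i_λ]`. -/
def pathEdges (γ : List V) : List (V × V) := γ.zip γ.tail

/-- The weight `L(γ) = 1 - ∑_{l=1}^{λ} (1 - p(i_{l-1}, i_l))` of a path. -/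
noncomputable def L (p : V × V → ℝ) (γ : List V) : ℝ :=
  1 - ((pathEdges γ).map (fun e => 1 - p e)).sum

/-- `π*_i = max(0, max_{γ ∈ Γ(S,i)} L(γ))`, with value `0` when `Γ(S,i) = ∅`. -/
noncomputable def piStar (E : Finset (V × V)) (p : V × V → ℝ) (S : Finset V) (i : V) : ℝ :=
  sSup (insert 0 {x : ℝ | ∃ γ : List V, IsPathFrom E S i γ ∧ x = L p γ})

/-- The independent cascade distribution `θ_ic` : each edge of `E` is live
independently with probability `p e`. -/
noncomputable def thetaIC (E : Finset (V × V)) (p : V × V → ℝ) (c : Finset (V × V)) : ℝ :=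
  if c ⊆ E then (∏ e ∈ c, p e) * ∏ e ∈ E \ c, (1 - p e) else 0

/-- The independent cascade influence function `f^ic`. -/
noncomputable def fic (E : Finset (V × V)) (p : V × V → ℝ) (S : Finset V) : ℝ :=
  expInf (thetaIC E p) S


/-- The edge set `E'` of the auxiliary graph `G' = (V ∪ {s,t}, E')`, where the
nodes are `V ⊕ Bool`, `s = Sum.inr true` and `t = Sum.inr false`. -/
def auxEdges (c : Finset (V × V)) (S : Finset V) : Finset ((V ⊕ Bool) × (V ⊕ Bool)) :=
  c.image (fun e => (Sum.inl e.1, Sum.inl e.2))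
    ∪ S.image (fun i => ((Sum.inr true : V ⊕ Bool), Sum.inl i))
    ∪ (Finset.univ \ S).image (fun j => (Sum.inl j, (Sum.inr false : V ⊕ Bool)))

/-- Net outflow of the flow `x` at node `u`, counting only edges of `E'`. -/
noncomputable def netflow (E' : Finset ((V ⊕ Bool) × (V ⊕ Bool)))
    (x : (V ⊕ Bool) × (V ⊕ Bool) → ℝ) (u : V ⊕ Bool) : ℝ :=
  ∑ e ∈ E'.filter (fun e => e.1 = u), x e - ∑ e ∈ E'.filter (fun e => e.2 = u), x e

/-- `Z c S` : the value of the max flow problem on the auxiliary graph: the maximum,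
over flows `x : E' → ℝ≥0` and values `v ∈ ℝ` satisfying flow conservation (net
outflow `v` at `s`, net inflow `v` at `t`, net flow `0` at every node of `V`) and
capacities `x (j, t) ≤ 1` for `j ∈ V \ S`, of the value `v`. -/
noncomputable def Z (c : Finset (V × V)) (S : Finset V) : ℝ :=
  sSup {v : ℝ | ∃ x : (V ⊕ Bool) × (V ⊕ Bool) → ℝ,
    (∀ e ∈ auxEdges c S, 0 ≤ x e) ∧
    (∀ j ∈ Finset.univ \ S, x (Sum.inl j, Sum.inr false) ≤ 1) ∧
    netflow (auxEdges c S) x (Sum.inr true) = v ∧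
    netflow (auxEdges c S) x (Sum.inr false) = -v ∧
    (∀ i : V, netflow (auxEdges c S) x (Sum.inl i) = 0)}


lemma netflow_count (E' : Finset ((V ⊕ Bool) × (V ⊕ Bool))) (a : V ⊕ Bool)
    (l : List (V ⊕ Bool)) (u : V ⊕ Bool)
    (hsub : ∀ e ∈ (a :: l).zip l, e ∈ E') :
    netflow E' (fun e => ((ecount e ((a :: l).zip l) : ℕ) : ℝ)) u
      = (if a = u then 1 else 0) - (if (a :: l).getLast? = some u then 1 else 0) := by
  unfold netflow
  beta_reduce
  rw [sum_count_filter E' (fun e => e.1 = u) _ hsub,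
    sum_count_filter E' (fun e => e.2 = u) _ hsub, srctgt]

lemma netflow_sum {ι : Type*} (T : Finset ι) (E' : Finset ((V ⊕ Bool) × (V ⊕ Bool)))
    (f : ι → ((V ⊕ Bool) × (V ⊕ Bool)) → ℝ) (u : V ⊕ Bool) :
    netflow E' (fun e => ∑ j ∈ T, f j e) u = ∑ j ∈ T, netflow E' (f j) u := by
  unfold netflow
  rw [Finset.sum_sub_distrib]
  congr 1 <;> exact Finset.sum_comm


/-- `R(c, S) = |S| + Z(c, S)`; equivalently, `Z(c, S)` equals the number
of nodes of `V \ S` reachable from `S` along edges of `c`. -/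
theorem influence_eq_card_add_maxflow (E : Finset (V × V)) (c : Finset (V × V)) (hc : c ⊆ E)
    (S : Finset V) :
    (R c S : ℝ) = (S.card : ℝ) + Z c S ∧
      Z c S = (Set.ncard {i : V | i ∉ S ∧ influenced c S i} : ℝ) := by
  classical
  set E' := auxEdges c S with hE'
  set T : Finset V := Finset.univ.filter (fun i => i ∉ S ∧ influenced c S i) with hTdef
  have hmem1 : ∀ a b : V, (a, b) ∈ c → ((Sum.inl a : V ⊕ Bool), Sum.inl b) ∈ E' := by
    intro a b h
    simp only [hE', auxEdges, Finset.mem_union, Finset.mem_image]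
    exact Or.inl (Or.inl ⟨(a, b), h, rfl⟩)
  have hmem2 : ∀ i ∈ S, ((Sum.inr true : V ⊕ Bool), Sum.inl i) ∈ E' := by
    intro i hi
    simp only [hE', auxEdges, Finset.mem_union, Finset.mem_image]
    exact Or.inl (Or.inr ⟨i, hi, rfl⟩)
  have hmem3 : ∀ j : V, j ∉ S → ((Sum.inl j : V ⊕ Bool), Sum.inr false) ∈ E' := by
    intro j hj
    simp only [hE', auxEdges, Finset.mem_union, Finset.mem_image, Finset.mem_sdiff,
      Finset.mem_univ, true_and]
    exact Or.inr ⟨j, hj, rfl⟩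
  set img : Finset ((V ⊕ Bool) × (V ⊕ Bool)) :=
    T.image (fun j => ((Sum.inl j : V ⊕ Bool), (Sum.inr false : V ⊕ Bool))) with himgdef
  -- Upper bound : every feasible flow value is at most `T.card`.
  have hub : ∀ v ∈ {v : ℝ | ∃ x : (V ⊕ Bool) × (V ⊕ Bool) → ℝ,
      (∀ e ∈ auxEdges c S, 0 ≤ x e) ∧
      (∀ j ∈ Finset.univ \ S, x (Sum.inl j, Sum.inr false) ≤ 1) ∧
      netflow (auxEdges c S) x (Sum.inr true) = v ∧
      netflow (auxEdges c S) x (Sum.inr false) = -v ∧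
      (∀ i : V, netflow (auxEdges c S) x (Sum.inl i) = 0)}, v ≤ (T.card : ℝ) := by
    rintro v ⟨x, hx0, hcap, hs, ht, hi⟩
    set A : Finset (V ⊕ Bool) :=
      insert (Sum.inr true) ((Finset.univ.filter (influenced c S)).image Sum.inl) with hA
    have hAmem : ∀ w : V ⊕ Bool,
        w ∈ A ↔ w = Sum.inr true ∨ ∃ i : V, influenced c S i ∧ Sum.inl i = w := by
      intro w
      simp only [hA, Finset.mem_insert, Finset.mem_image, Finset.mem_filter, Finset.mem_univ,
        true_and]
    have hAinfl : ∀ i : V, (Sum.inl i : V ⊕ Bool) ∈ A ↔ influenced c S i := by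
      intro i
      rw [hAmem]
      constructor
      · rintro (h | ⟨i', hi', h⟩)
        · exact absurd h (by simp)
        · cases Sum.inl.inj h; exact hi'
      · exact fun h => Or.inr ⟨i, h, rfl⟩
    have htA : (Sum.inr false : V ⊕ Bool) ∉ A := by
      rw [hAmem]; push_neg; exact ⟨by simp, fun i _ => by simp⟩
    have hnotin : (Sum.inr true : V ⊕ Bool)
        ∉ (Finset.univ.filter (influenced c S)).image Sum.inl := by simp
    have hsumA : ∑ u ∈ A, netflow E' x u = v := by
      rw [hA, Finset.sum_insert hnotin, hs,
        Finset.sum_image (fun a _ b _ h => Sum.inl.inj h)]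
      simp [hE', hi]
    have h1 : ∀ u, netflow E' x u
        = ∑ e ∈ E', ((if e.1 = u then x e else 0) - (if e.2 = u then x e else 0)) := by
      intro u
      unfold netflow
      rw [Finset.sum_filter, Finset.sum_filter, ← Finset.sum_sub_distrib]
    have hswap : ∑ u ∈ A, netflow E' x u
        = ∑ e ∈ E', ((if e.1 ∈ A then x e else 0) - (if e.2 ∈ A then x e else 0)) := by
      calc ∑ u ∈ A, netflow E' x u
          = ∑ u ∈ A, ∑ e ∈ E', ((if e.1 = u then x e else 0) - (if e.2 = u then x e else 0)) :=
            Finset.sum_congr rfl fun u _ => h1 u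
        _ = ∑ e ∈ E', ∑ u ∈ A, ((if e.1 = u then x e else 0) - (if e.2 = u then x e else 0)) :=
            Finset.sum_comm
        _ = ∑ e ∈ E', ((if e.1 ∈ A then x e else 0) - (if e.2 ∈ A then x e else 0)) := by
            refine Finset.sum_congr rfl fun e _ => ?_
            rw [Finset.sum_sub_distrib, Finset.sum_ite_eq A e.1 (fun _ => x e),
              Finset.sum_ite_eq A e.2 (fun _ => x e)]
    have hbound : ∀ e ∈ E', (if e.1 ∈ A then x e else 0) - (if e.2 ∈ A then x e else 0)
        ≤ (if e ∈ img then (1 : ℝ) else 0) := by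
      intro e he
      have hx := hx0 e he
      rw [hE'] at he
      simp only [auxEdges, Finset.mem_union, Finset.mem_image, Finset.mem_sdiff,
        Finset.mem_univ, true_and] at he
      rcases he with (⟨⟨a, b⟩, hab, rfl⟩ | ⟨i, hiS, rfl⟩) | ⟨j, hjS, rfl⟩
      · have himg : ((Sum.inl a : V ⊕ Bool), (Sum.inl b : V ⊕ Bool)) ∉ img := by
          simp [himgdef]
        rw [if_neg himg]
        by_cases hA1 : (Sum.inl a : V ⊕ Bool) ∈ A
        · obtain ⟨s₀, hs₀, hr⟩ := (hAinfl a).mp hA1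
          have hbinf : (Sum.inl b : V ⊕ Bool) ∈ A := (hAinfl b).mpr ⟨s₀, hs₀, hr.tail hab⟩
          rw [if_pos hA1, if_pos hbinf]
          simp
        · rw [if_neg hA1]
          split <;> simp_all
      · have himg : ((Sum.inr true : V ⊕ Bool), (Sum.inl i : V ⊕ Bool)) ∉ img := by
          simp [himgdef]
        have hA1 : (Sum.inr true : V ⊕ Bool) ∈ A := by rw [hAmem]; exact Or.inl rfl
        have hA2 : (Sum.inl i : V ⊕ Bool) ∈ A :=
          (hAinfl i).mpr ⟨i, hiS, Relation.ReflTransGen.refl⟩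
        rw [if_neg himg, if_pos hA1, if_pos hA2]
        simp
      · rw [if_neg htA, sub_zero]
        by_cases hA1 : (Sum.inl j : V ⊕ Bool) ∈ A
        · have hjT : j ∈ T := by
            rw [hTdef, Finset.mem_filter]
            exact ⟨Finset.mem_univ j, hjS, (hAinfl j).mp hA1⟩
          have himg : ((Sum.inl j : V ⊕ Bool), (Sum.inr false : V ⊕ Bool)) ∈ img :=
            Finset.mem_image_of_mem _ hjT
          rw [if_pos hA1, if_pos himg]
          exact hcap j (by simp [hjS])
        · rw [if_neg hA1]
          split <;> norm_num
    have himgsub : img ⊆ E' := by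
      intro e he
      rw [himgdef] at he
      obtain ⟨j, hjT, rfl⟩ := Finset.mem_image.mp he
      rw [hTdef, Finset.mem_filter] at hjT
      exact hmem3 j hjT.2.1
    have hinj : Function.Injective
        (fun j : V => ((Sum.inl j : V ⊕ Bool), (Sum.inr false : V ⊕ Bool))) := by
      intro a b h
      exact Sum.inl.inj (congrArg Prod.fst h)
    calc v = ∑ u ∈ A, netflow E' x u := hsumA.symm
      _ = ∑ e ∈ E', ((if e.1 ∈ A then x e else 0) - (if e.2 ∈ A then x e else 0)) := hswap
      _ ≤ ∑ e ∈ E', (if e ∈ img then (1 : ℝ) else 0) := Finset.sum_le_sum hbound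
      _ = ((E'.filter (· ∈ img)).card : ℝ) := by rw [Finset.sum_boole]
      _ = (T.card : ℝ) := by
          rw [Finset.filter_mem_eq_inter, Finset.inter_eq_right.mpr himgsub, himgdef,
            Finset.card_image_of_injective _ hinj]
  -- Construction of an optimal flow.
  have hpath : ∀ j ∈ T, ∃ l : List (V ⊕ Bool),
      (∀ e ∈ ((Sum.inr true : V ⊕ Bool) :: l).zip l, e ∈ E') ∧
      ((Sum.inr true : V ⊕ Bool) :: l).getLast? = some (Sum.inr false) ∧
      (∀ j' : V, j' ≠ j →
        ((Sum.inl j' : V ⊕ Bool), (Sum.inr false : V ⊕ Bool))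
          ∉ ((Sum.inr true : V ⊕ Bool) :: l).zip l) ∧
      ecount ((Sum.inl j : V ⊕ Bool), (Sum.inr false : V ⊕ Bool))
          (((Sum.inr true : V ⊕ Bool) :: l).zip l) ≤ 1 := by
    intro j hjT
    rw [hTdef, Finset.mem_filter] at hjT
    obtain ⟨-, hjS, s₀, hs₀S, hr⟩ := hjT
    obtain ⟨l₀, hch, hlast⟩ := List.exists_isChain_cons_of_relationReflTransGen hr
    set m : List (V ⊕ Bool) := (s₀ :: l₀).map Sum.inl with hm
    have hmne : m ≠ [] := by simp [hm]
    have hmlast : m.getLast? = some (Sum.inl j) := by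
      rw [hm, List.getLast?_map, List.getLast?_eq_getLast (l := s₀ :: l₀) (by simp), hlast]
      rfl
    have hfnotin : (Sum.inr false : V ⊕ Bool) ∉ (Sum.inr true : V ⊕ Bool) :: m := by
      simp [hm]
    have hchain : ((Sum.inr true : V ⊕ Bool) :: (m ++ [Sum.inr false])).Chain'
        (fun a b => (a, b) ∈ E') := by
      rw [show List.Chain' _ _ ↔ _ from List.isChain_cons]
      constructor
      · intro y hy
        rw [hm] at hy
        simp only [List.map_cons, List.cons_append, List.head?_cons, Option.mem_def,
          Option.some.injEq] at hy
        rw [← hy]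
        exact hmem2 s₀ hs₀S
      · rw [List.isChain_append]
        refine ⟨?_, List.isChain_singleton _, ?_⟩
        · rw [hm]
          refine (List.isChain_map Sum.inl).mpr ?_
          exact hch.imp fun a b hab => hmem1 a b hab
        · intro y hy z hz
          rw [hmlast] at hy
          simp only [Option.mem_def, Option.some.injEq, List.head?_cons] at hy hz
          rw [← hy, ← hz]
          exact hmem3 j hjS
    refine ⟨m ++ [Sum.inr false], ?_, ?_, ?_, ?_⟩
    · intro e he
      exact rel_of_chain'_zip hchain e he
    · rw [show ((Sum.inr true : V ⊕ Bool) :: (m ++ [Sum.inr false]))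
          = ((Sum.inr true : V ⊕ Bool) :: m) ++ [Sum.inr false] by simp,
        List.getLast?_concat]
    · intro j' hne hmem
      have hzip : ((Sum.inl j' : V ⊕ Bool), (Sum.inr false : V ⊕ Bool))
          ∈ (((Sum.inr true : V ⊕ Bool) :: m) ++ [Sum.inr false]).zip (m ++ [Sum.inr false]) := by
        simpa using hmem
      have := last_of_zip (Sum.inr false) m (Sum.inr true) hfnotin _ hzip rfl
      rw [hm] at this
      simp only [List.map_cons] at this
      rw [List.getLast?_cons_cons] at this
      rw [← List.map_cons, ← hm, hmlast] at this
      exact hne (Sum.inl.inj (Option.some.inj this))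
    · have h1 := ecount_zip_le ((Sum.inl j : V ⊕ Bool)) ((Sum.inr false : V ⊕ Bool))
        ((Sum.inr true : V ⊕ Bool) :: (m ++ [Sum.inr false])) (m ++ [Sum.inr false])
      have h3 : (Sum.inr false : V ⊕ Bool) ∉ m := by simp [hm]
      have h2 : ecount (Sum.inr false : V ⊕ Bool) (m ++ [Sum.inr false]) = 1 := by
        rw [ecount_append, ecount_eq_zero h3]
        simp [ecount]
      omega
  choose g hg using hpath
  set x : ((V ⊕ Bool) × (V ⊕ Bool)) → ℝ := fun e => ∑ j ∈ T.attach,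
    ((ecount e ((Sum.inr true :: g j.1 j.2).zip (g j.1 j.2)) : ℕ) : ℝ) with hxdef
  have hmemZ : (T.card : ℝ) ∈ {v : ℝ | ∃ x : (V ⊕ Bool) × (V ⊕ Bool) → ℝ,
      (∀ e ∈ auxEdges c S, 0 ≤ x e) ∧
      (∀ j ∈ Finset.univ \ S, x (Sum.inl j, Sum.inr false) ≤ 1) ∧
      netflow (auxEdges c S) x (Sum.inr true) = (T.card : ℝ) ∧
      netflow (auxEdges c S) x (Sum.inr false) = -(T.card : ℝ) ∧
      (∀ i : V, netflow (auxEdges c S) x (Sum.inl i) = 0)} := by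
    have hnf : ∀ u : V ⊕ Bool, netflow E' x u = ∑ j ∈ T.attach,
        ((if (Sum.inr true : V ⊕ Bool) = u then (1:ℝ) else 0)
          - (if ((Sum.inr true : V ⊕ Bool) :: g j.1 j.2).getLast? = some u then 1 else 0)) := by
      intro u
      rw [hxdef, netflow_sum]
      exact Finset.sum_congr rfl fun j _ => netflow_count E' _ _ u (hg j.1 j.2).1
    refine ⟨x, ?_, ?_, ?_, ?_, ?_⟩
    · intro e _
      rw [hxdef]
      exact Finset.sum_nonneg fun j _ => by positivity
    · intro j hjS
      rw [hxdef]
      calc ∑ j' ∈ T.attach,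
            ((ecount ((Sum.inl j : V ⊕ Bool), (Sum.inr false : V ⊕ Bool))
              ((Sum.inr true :: g j'.1 j'.2).zip (g j'.1 j'.2)) : ℕ) : ℝ)
          ≤ ∑ j' ∈ T.attach, (if (j' : V) = j then (1:ℝ) else 0) := by
            refine Finset.sum_le_sum fun j' _ => ?_
            by_cases h : (j' : V) = j
            · rw [if_pos h, ← h]
              exact_mod_cast (hg j'.1 j'.2).2.2.2
            · have h0 : ecount ((Sum.inl j : V ⊕ Bool), (Sum.inr false : V ⊕ Bool))
                  ((Sum.inr true :: g j'.1 j'.2).zip (g j'.1 j'.2)) = 0 :=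
                ecount_eq_zero ((hg j'.1 j'.2).2.2.1 j (fun hh => h hh.symm))
              rw [if_neg h, h0]
              simp
        _ = ∑ a ∈ T, (if a = j then (1:ℝ) else 0) :=
            Finset.sum_attach T (fun a => if a = j then (1:ℝ) else 0)
        _ = if j ∈ T then 1 else 0 := Finset.sum_ite_eq' T j fun _ => 1
        _ ≤ 1 := by split <;> norm_num
    · rw [hnf]
      have : ∀ j ∈ T.attach, ((if (Sum.inr true : V ⊕ Bool) = Sum.inr true then (1:ℝ) else 0)
          - (if ((Sum.inr true : V ⊕ Bool) :: g j.1 j.2).getLast? = some (Sum.inr true) then 1 else 0)) = 1 := by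
        intro j _
        rw [(hg j.1 j.2).2.1]
        simp
      rw [Finset.sum_congr rfl this]
      simp
    · rw [hnf]
      have : ∀ j ∈ T.attach, ((if (Sum.inr true : V ⊕ Bool) = Sum.inr false then (1:ℝ) else 0)
          - (if ((Sum.inr true : V ⊕ Bool) :: g j.1 j.2).getLast? = some (Sum.inr false) then 1 else 0)) = -1 := by
        intro j _
        rw [(hg j.1 j.2).2.1]
        simp
      rw [Finset.sum_congr rfl this]
      simp
    · intro i
      rw [hnf]
      have : ∀ j ∈ T.attach, ((if (Sum.inr true : V ⊕ Bool) = Sum.inl i then (1:ℝ) else 0)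
          - (if ((Sum.inr true : V ⊕ Bool) :: g j.1 j.2).getLast? = some (Sum.inl i) then 1 else 0)) = 0 := by
        intro j _
        rw [(hg j.1 j.2).2.1]
        simp
      rw [Finset.sum_congr rfl this]
      simp
  have hZ : Z c S = (T.card : ℝ) := by
    unfold Z
    exact IsGreatest.csSup_eq ⟨hmemZ, hub⟩
  have hTset : {i : V | i ∉ S ∧ influenced c S i} = (T : Set V) := by
    ext i
    rw [hTdef]
    simp
  have hdisj : Disjoint S T := by
    rw [Finset.disjoint_left]
    intro a ha haT
    rw [hTdef, Finset.mem_filter] at haT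
    exact haT.2.1 ha
  have hR : R c S = S.card + T.card := by
    rw [R]
    have hset : {i : V | influenced c S i} = ((S ∪ T : Finset V) : Set V) := by
      ext i
      simp only [Set.mem_setOf_eq, Finset.coe_union, Set.mem_union, Finset.mem_coe, hTdef,
        Finset.mem_filter, Finset.mem_univ, true_and]
      constructor
      · intro h
        by_cases hiS : i ∈ S
        · exact Or.inl hiS
        · exact Or.inr ⟨hiS, h⟩
      · rintro (h | ⟨-, h⟩)
        · exact ⟨i, h, Relation.ReflTransGen.refl⟩
        · exact h
    rw [hset, Set.ncard_coe_finset, Finset.card_union_of_disjoint hdisj]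
  constructor
  · rw [hR, hZ]
    push_cast
    ring
  · rw [hZ, hTset, Set.ncard_coe_finset]

end CorrIM
end

section
/- For every θ ∈ Θ, every seed set S ⊆ V, and every node i ∈ V \ S, the probability under θ that i is influenced (i.e., θ({c : i is reachable from S along edges of c})) is at least π*_i = max(0, max_{γ ∈ Γ(S, i)} L(γ)). -/
open scoped BigOperators

namespace CorrIM

variable {V : Type*} [Fintype V] [DecidableEq V]

lemma prob_nonneg (θ : Finset (V × V) → ℝ) (h0 : ∀ c, 0 ≤ θ c)
    (A : Finset (V × V) → Prop) : 0 ≤ prob θ A := by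
  unfold prob
  exact Finset.sum_nonneg fun c _ => by split <;> simp [h0 c]

lemma prob_le_prob (θ : Finset (V × V) → ℝ) (h0 : ∀ c, 0 ≤ θ c)
    {A B : Finset (V × V) → Prop} (h : ∀ c, A c → B c) :
    prob θ A ≤ prob θ B := by
  unfold prob
  refine Finset.sum_le_sum fun c _ => ?_
  by_cases hA : A c
  · simp [hA, h c hA]
  · simp only [hA, if_false]
    split <;> simp [h0 c]

lemma prob_or_le (θ : Finset (V × V) → ℝ) (h0 : ∀ c, 0 ≤ θ c)
    (A B : Finset (V × V) → Prop) :
    prob θ (fun c => A c ∨ B c) ≤ prob θ A + prob θ B := by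
  unfold prob
  rw [← Finset.sum_add_distrib]
  refine Finset.sum_le_sum fun c _ => ?_
  by_cases hA : A c <;> by_cases hB : B c <;> simp [hA, hB] <;> linarith [h0 c]

lemma prob_add_compl (θ : Finset (V × V) → ℝ)
    (hsum : (∑ c : Finset (V × V), θ c) = 1) (A : Finset (V × V) → Prop) :
    prob θ A + prob θ (fun c => ¬ A c) = 1 := by
  unfold prob
  rw [← Finset.sum_add_distrib, ← hsum]
  refine Finset.sum_congr rfl fun c _ => ?_
  by_cases h : A c <;> simp [h]

lemma prob_mem_eq (E : Finset (V × V)) (p : V × V → ℝ)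
    (θ : Finset (V × V) → ℝ) (hθ : memTheta E p θ) (e : V × V) (he : e ∈ E) :
    prob θ (fun c => e ∈ c) = p e := by
  rw [← hθ.2.2.2 e he]
  unfold prob
  refine Finset.sum_congr rfl fun c _ => ?_
  by_cases h : e ∈ c <;> simp [h]

lemma prob_exists_not_le (E : Finset (V × V)) (p : V × V → ℝ)
    (θ : Finset (V × V) → ℝ) (hθ : memTheta E p θ) :
    ∀ l : List (V × V), (∀ e ∈ l, e ∈ E) →
      prob θ (fun c => ∃ e ∈ l, e ∉ c) ≤ (l.map (fun e => 1 - p e)).sum := by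
  intro l
  induction l with
  | nil =>
    intro _
    simp [prob]
  | cons e l ih =>
    intro hE
    have h0 := hθ.1
    have h1 : prob θ (fun c => ∃ e' ∈ e :: l, e' ∉ c) ≤
        prob θ (fun c => e ∉ c) + prob θ (fun c => ∃ e' ∈ l, e' ∉ c) := by
      refine le_trans (prob_le_prob θ h0 (B := fun c => (e ∉ c) ∨ ∃ e' ∈ l, e' ∉ c)
        fun c hc => ?_) (prob_or_le θ h0 _ _)
      obtain ⟨e', he', hne⟩ := hc
      rcases List.mem_cons.mp he' with rfl | h
      · exact Or.inl hne
      · exact Or.inr ⟨e', h, hne⟩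
    have h2 : prob θ (fun c => e ∉ c) = 1 - p e := by
      have := prob_add_compl θ hθ.2.2.1 (fun c => e ∈ c)
      rw [prob_mem_eq E p θ hθ e (hE e (List.mem_cons_self))] at this
      linarith
    calc prob θ (fun c => ∃ e' ∈ e :: l, e' ∉ c)
        ≤ (1 - p e) + prob θ (fun c => ∃ e' ∈ l, e' ∉ c) := by rw [← h2]; exact h1
      _ ≤ (1 - p e) + (l.map (fun e => 1 - p e)).sum := by
          have := ih (fun e' he' => hE e' (List.mem_cons_of_mem e he'))
          linarith
      _ = ((e :: l).map (fun e => 1 - p e)).sum := by simp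

lemma pathEdges_prop_of_chain' {r : V → V → Prop} :
    ∀ γ : List V, γ.Chain' r → ∀ e ∈ pathEdges γ, r e.1 e.2 := by
  intro γ
  induction γ with
  | nil => simp [pathEdges]
  | cons a t ih =>
    intro hc e he
    cases t with
    | nil => simp [pathEdges] at he
    | cons b t' =>
      simp only [List.Chain', List.isChain_cons_cons] at hc
      have : pathEdges (a :: b :: t') = (a, b) :: pathEdges (b :: t') := by
        simp [pathEdges]
      rw [this] at he
      rcases List.mem_cons.mp he with rfl | h
      · exact hc.1
      · exact ih hc.2 e h

lemma reach_of_edges (c : Finset (V × V)) :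
    ∀ (γ : List V) (s j : V), γ.head? = some s → γ.getLast? = some j →
      (∀ e ∈ pathEdges γ, e ∈ c) →
      Relation.ReflTransGen (fun a b : V => (a, b) ∈ c) s j := by
  intro γ
  induction γ with
  | nil => intro s j hs; simp at hs
  | cons a t ih =>
    intro s j hs hl he
    simp only [List.head?_cons, Option.some.injEq] at hs
    subst hs
    cases t with
    | nil =>
      simp at hl
      subst hl
      exact Relation.ReflTransGen.refl
    | cons b t' =>
      have hedges : pathEdges (a :: b :: t') = (a, b) :: pathEdges (b :: t') := by
        simp [pathEdges]
      have hsb : (a, b) ∈ c := he (a, b) (by rw [hedges]; exact List.mem_cons_self)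
      have hrest : Relation.ReflTransGen (fun a b : V => (a, b) ∈ c) b j := by
        refine ih b j rfl ?_ ?_
        · rw [← hl, List.getLast?_cons_cons]
        · intro e hmem
          exact he e (by rw [hedges]; exact List.mem_cons_of_mem _ hmem)
      exact (Relation.ReflTransGen.single hsb).trans hrest

/-- for every `θ ∈ Θ`, every seed set `S` and every `i ∈ V \ S`, the
probability under `θ` that `i` is influenced is at least `π*_i`. -/
theorem influence_prob_ge_piStar (E : Finset (V × V)) (p : V × V → ℝ)
    (hp : ∀ e ∈ E, 0 ≤ p e ∧ p e ≤ 1)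
    (θ : Finset (V × V) → ℝ) (hθ : memTheta E p θ)
    (S : Finset V) (i : V) (hi : i ∉ S) :
    piStar E p S i ≤ prob θ (fun c => influenced c S i) := by
  obtain ⟨h0, hsub, hsum, hmarg⟩ := hθ
  have hθ' : memTheta E p θ := ⟨h0, hsub, hsum, hmarg⟩
  have hprob0 : 0 ≤ prob θ (fun c => influenced c S i) := prob_nonneg θ h0 _
  unfold piStar
  refine csSup_le ⟨0, Set.mem_insert 0 _⟩ ?_
  rintro x hx
  rcases Set.mem_insert_iff.mp hx with rfl | ⟨γ, hγ, rfl⟩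
  · exact hprob0
  · obtain ⟨hlen, ⟨s, hsS, hhead⟩, hlast, hchain⟩ := hγ
    have hEdgesE : ∀ e ∈ pathEdges γ, e ∈ E := by
      intro e he
      exact pathEdges_prop_of_chain' γ hchain e he
    -- the event that all edges of the path are live
    set A : Finset (V × V) → Prop := fun c => ∀ e ∈ pathEdges γ, e ∈ c with hA
    have hAinf : ∀ c, A c → influenced c S i := by
      intro c hc
      exact ⟨s, hsS, reach_of_edges c γ s i hhead hlast hc⟩
    have hcompl : ∀ c, ¬ A c → ∃ e ∈ pathEdges γ, e ∉ c := by
      intro c hc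
      by_contra hcon
      push_neg at hcon
      exact hc hcon
    have hbound : prob θ (fun c => ¬ A c) ≤ ((pathEdges γ).map (fun e => 1 - p e)).sum :=
      le_trans (prob_le_prob θ h0 hcompl) (prob_exists_not_le E p θ hθ' _ hEdgesE)
    have hsplit := prob_add_compl θ hsum A
    have hle : prob θ A ≤ prob θ (fun c => influenced c S i) :=
      prob_le_prob θ h0 hAinf
    unfold L
    linarith

end CorrIM
end

section
/- For every θ ∈ Θ and every seed set S ⊆ V, the expected number of influenced nodes satisfies E_θ[R(c̃, S)] ≥ |S| + Σ_{i ∈ V \ S} π*_i. -/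
open scoped BigOperators

namespace CorrIM

variable {V : Type*} [Fintype V] [DecidableEq V]

/-! ### Auxiliary lemmas -/

lemma edges_mem_of_chain' {R : V → V → Prop} :
    ∀ (γ : List V), γ.Chain' R → ∀ e ∈ pathEdges γ, R e.1 e.2
  | [], _, e, he => by simp [pathEdges] at he
  | [_], _, e, he => by simp [pathEdges] at he
  | a :: b :: t, h, e, he => by
      simp only [List.Chain', List.isChain_cons_cons] at h
      have : pathEdges (a :: b :: t) = (a, b) :: pathEdges (b :: t) := by
        simp [pathEdges]
      rw [this] at he
      rcases List.mem_cons.1 he with h1 | h1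
      · subst h1; exact h.1
      · exact edges_mem_of_chain' (b :: t) h.2 e h1

lemma chain'_of_edges (c : Finset (V × V)) :
    ∀ (γ : List V), (∀ e ∈ pathEdges γ, e ∈ c) →
      γ.Chain' (fun a b : V => (a, b) ∈ c)
  | [], _ => List.isChain_nil
  | [_], _ => List.isChain_singleton _
  | a :: b :: t, h => by
      have hpe : pathEdges (a :: b :: t) = (a, b) :: pathEdges (b :: t) := by
        simp [pathEdges]
      simp only [List.Chain', List.isChain_cons_cons]
      refine ⟨h (a, b) (by rw [hpe]; exact List.mem_cons_self), ?_⟩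
      exact chain'_of_edges c (b :: t) (fun e he => h e (by rw [hpe]; exact List.mem_cons_of_mem _ he))

lemma reflTransGen_of_chain' {R : V → V → Prop} :
    ∀ (γ : List V) (s i : V), γ.head? = some s → γ.getLast? = some i →
      γ.Chain' R → Relation.ReflTransGen R s i
  | [], s, i, hs, _, _ => by simp at hs
  | [a], s, i, hs, hi, _ => by
      simp at hs hi; subst hs; subst hi; exact Relation.ReflTransGen.refl
  | a :: b :: t, s, i, hs, hi, hc => by
      simp only [List.Chain', List.isChain_cons_cons] at hc
      have hs' : a = s := by simpa using hs
      have hi' : (b :: t).getLast? = some i := by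
        rw [← hi]; exact (List.getLast?_cons_cons ..).symm
      have htail := reflTransGen_of_chain' (b :: t) b i rfl hi' hc.2
      subst hs'
      exact Relation.ReflTransGen.head hc.1 htail

lemma prob_congr (θ : Finset (V × V) → ℝ) {A B : Finset (V × V) → Prop}
    (h : ∀ c, A c ↔ B c) : prob θ A = prob θ B := by
  classical
  unfold prob
  exact Finset.sum_congr rfl fun c _ => by
    by_cases hA : A c
    · rw [if_pos hA, if_pos ((h c).1 hA)]
    · rw [if_neg hA, if_neg (fun hB => hA ((h c).2 hB))]

lemma prob_and_ge (θ : Finset (V × V) → ℝ) (h0 : ∀ c, 0 ≤ θ c)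
    (h1 : (∑ c : Finset (V × V), θ c) = 1) (A B : Finset (V × V) → Prop) :
    prob θ A + prob θ B - 1 ≤ prob θ (fun c => A c ∧ B c) := by
  classical
  have key : prob θ A + prob θ B - prob θ (fun c => A c ∧ B c) ≤ ∑ c : Finset (V × V), θ c := by
    unfold prob
    rw [← Finset.sum_add_distrib, ← Finset.sum_sub_distrib]
    refine Finset.sum_le_sum fun c _ => ?_
    by_cases hA : A c <;> by_cases hB : B c <;>
      simp [hA, hB, h0 c]
  rw [h1] at key
  linarith

lemma prob_all_mem_ge (E : Finset (V × V)) (p : V × V → ℝ)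
    (θ : Finset (V × V) → ℝ) (hθ : memTheta E p θ) :
    ∀ (l : List (V × V)), (∀ e ∈ l, e ∈ E) →
      1 - (l.map (fun e => 1 - p e)).sum ≤ prob θ (fun c => ∀ e ∈ l, e ∈ c)
  | [], _ => by
      have : prob θ (fun c => ∀ e ∈ ([] : List (V × V)), e ∈ c) = 1 := by
        classical
        unfold prob
        simpa using hθ.2.2.1
      rw [this]
      simp
  | e :: t, h => by
      classical
      have he : e ∈ E := h e (List.mem_cons_self)
      have hmarg : prob θ (fun c => e ∈ c) = p e := by
        unfold prob
        rw [← hθ.2.2.2 e he]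
        exact Finset.sum_congr rfl fun c _ => by
          by_cases hc : e ∈ c
          · rw [if_pos hc, if_pos hc]
          · rw [if_neg hc, if_neg hc]
      have ht := prob_all_mem_ge E p θ hθ t (fun x hx => h x (List.mem_cons_of_mem _ hx))
      have hcongr : prob θ (fun c => ∀ x ∈ e :: t, x ∈ c)
          = prob θ (fun c => e ∈ c ∧ ∀ x ∈ t, x ∈ c) := by
        refine prob_congr θ fun c => ?_
        simp [List.forall_mem_cons]
      have hand := prob_and_ge θ hθ.1 hθ.2.2.1 (fun c => e ∈ c) (fun c => ∀ x ∈ t, x ∈ c)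
      rw [hcongr]
      simp only [List.map_cons, List.sum_cons]
      linarith

open Classical in
lemma R_eq_sum (c : Finset (V × V)) (S : Finset V) :
    (R c S : ℝ) = ∑ i : V, if influenced c S i then (1 : ℝ) else 0 := by
  rw [R, Set.ncard_eq_toFinset_card', Set.toFinset_setOf, Finset.card_filter]
  push_cast
  exact Finset.sum_congr rfl fun i _ => by
    by_cases h : influenced c S i <;> simp [h]

/-- for every `θ ∈ Θ` and every seed set `S`,
`E_θ[R(c̃, S)] ≥ |S| + ∑_{i ∈ V \ S} π*_i`. -/
theorem expInf_ge_card_add_sum_piStar (E : Finset (V × V)) (p : V × V → ℝ)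
    (hp : ∀ e ∈ E, 0 ≤ p e ∧ p e ≤ 1)
    (θ : Finset (V × V) → ℝ) (hθ : memTheta E p θ) (S : Finset V) :
    (S.card : ℝ) + ∑ i ∈ Finset.univ \ S, piStar E p S i ≤ expInf θ S := by
  classical
  set F : V → ℝ := fun i => ∑ c : Finset (V × V), θ c * (if influenced c S i then (1 : ℝ) else 0)
    with hF
  have hexp : expInf θ S = ∑ i : V, F i := by
    unfold expInf
    have hc : ∀ c : Finset (V × V), θ c * (R c S : ℝ)
        = ∑ i : V, θ c * (if influenced c S i then (1 : ℝ) else 0) := fun c => by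
      rw [R_eq_sum, Finset.mul_sum]
    simp only [hc]
    rw [Finset.sum_comm]
  have hFnonneg : ∀ i, 0 ≤ F i := fun i =>
    Finset.sum_nonneg fun c _ => mul_nonneg (hθ.1 c) (by positivity)
  have hFseed : ∀ i ∈ S, F i = 1 := by
    intro i hi
    have : ∀ c : Finset (V × V), influenced c S i :=
      fun c => ⟨i, hi, Relation.ReflTransGen.refl⟩
    simp only [hF, this, if_true, mul_one]
    exact hθ.2.2.1
  have hFbound : ∀ i, piStar E p S i ≤ F i := by
    intro i
    refine Real.sSup_le ?_ (hFnonneg i)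
    rintro x (rfl | ⟨γ, hγ, rfl⟩)
    · exact hFnonneg i
    · -- x = L p γ for a path γ
      obtain ⟨hlen, ⟨s, hs, hhead⟩, hlast, hchain⟩ := hγ
      have hedgesE : ∀ e ∈ pathEdges γ, e ∈ E := fun e he =>
        edges_mem_of_chain' γ hchain e he
      have hub := prob_all_mem_ge E p θ hθ (pathEdges γ) hedgesE
      have hprobF : prob θ (fun c => ∀ e ∈ pathEdges γ, e ∈ c) ≤ F i := by
        unfold prob
        refine Finset.sum_le_sum fun c _ => ?_
        by_cases hall : ∀ e ∈ pathEdges γ, e ∈ c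
        · rw [if_pos hall]
          have hinf : influenced c S i :=
            ⟨s, hs, reflTransGen_of_chain' γ s i hhead hlast (chain'_of_edges c γ hall)⟩
          rw [if_pos hinf, mul_one]
        · rw [if_neg hall]
          exact mul_nonneg (hθ.1 c) (by positivity)
      have : L p γ = 1 - ((pathEdges γ).map (fun e => 1 - p e)).sum := rfl
      rw [this]
      linarith
  rw [hexp, ← Finset.sum_sdiff (Finset.subset_univ S)]
  have h1 : ∑ i ∈ S, F i = (S.card : ℝ) := by
    rw [Finset.sum_congr rfl hFseed]
    simp
  have h2 : ∑ i ∈ Finset.univ \ S, piStar E p S i ≤ ∑ i ∈ Finset.univ \ S, F i :=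
    Finset.sum_le_sum fun i _ => hFbound i
  linarith

end CorrIM
end
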